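/- If G is a graph of order n, then for every p ∈ [n], the zero forcing number Z(G) is at least δ_p(G), where δ_p(G) = min{|N_G(X)| : X ⊆ V(G), |X| = p}. -/
import Mathlib


open scoped Classical

variable {V : Type*}

/-- `Z` is a zero forcing set of `G`: the vertices outside `Z` can be listed `u 0, …, u (k-1)`
so that each `u i` is the unique neighbor of some vertex `v i` of `Z ∪ {u j : j < i}`
outside `Z ∪ {u j : j < i}`. -/
def IsZeroForcingSet [Fintype V] (G : SimpleGraph V) (Z : Finset V) : Prop :=
  ∃ (k : ℕ) (u : Fin k → V) (v : Fin k → V),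
    Function.Injective u ∧ (∀ w, w ∉ Z ↔ ∃ i, u i = w) ∧
    ∀ i : Fin k,
      (v i ∈ Z ∨ ∃ j : Fin k, j < i ∧ u j = v i) ∧
      G.Adj (v i) (u i) ∧
      ∀ w, G.Adj (v i) w → w ∉ Z → (∀ j : Fin k, j < i → u j ≠ w) → w = u i

/-- The zero forcing number of `G`: minimum size of a zero forcing set. -/
noncomputable def zeroForcingNumber [Fintype V] (G : SimpleGraph V) : ℕ :=
  sInf {n | ∃ Z : Finset V, IsZeroForcingSet G Z ∧ Z.card = n}

/-- The external neighborhood of a set of vertices. -/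
def extNbhd (G : SimpleGraph V) (X : Set V) : Set V :=
  {v | v ∉ X ∧ ∃ x ∈ X, G.Adj v x}

/-- `δ_p(G)`: the minimum of `|N_G(X)|` over all `p`-element vertex sets `X`. -/
noncomputable def deltaP [Fintype V] (G : SimpleGraph V) (p : ℕ) : ℕ :=
  sInf {m | ∃ X : Finset V, X.card = p ∧ (extNbhd G (↑X : Set V)).ncard = m}

theorem zfs_bound [Fintype V] (G : SimpleGraph V) (Z : Finset V) (p : ℕ)
    (hZ : IsZeroForcingSet G Z) (hpn : p ≤ Fintype.card V) :
    deltaP G p ≤ Z.card := by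
  obtain ⟨k, u, v, huinj, hcompl, hcond⟩ := hZ
  have hu_not_Z : ∀ i : Fin k, u i ∉ Z := fun i => (hcompl (u i)).2 ⟨i, rfl⟩
  have hZk : Z.card + k = Fintype.card V := by
    have h1 : Zᶜ = Finset.univ.image u := by
      ext w
      simp only [Finset.mem_compl, Finset.mem_image, Finset.mem_univ, true_and]
      exact hcompl w
    have h2 := Finset.card_compl Z
    rw [h1, Finset.card_image_of_injective _ huinj, Finset.card_univ, Fintype.card_fin] at h2
    have hle : Z.card ≤ Fintype.card V := Finset.card_le_card (Finset.subset_univ Z) |>.trans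
      (le_of_eq (Finset.card_univ))
    omega
  by_cases hpk : p ≤ k
  · -- Case 1 : take the last `p` forced vertices
    set T : Finset (Fin k) := Finset.univ.filter (fun i => k - p ≤ (i : ℕ)) with hT
    set X : Finset V := T.image u with hX
    have hmemX : ∀ w, w ∈ X ↔ ∃ i : Fin k, k - p ≤ (i : ℕ) ∧ u i = w := by
      intro w
      simp only [hX, hT, Finset.mem_image, Finset.mem_filter, Finset.mem_univ, true_and]
    have hTcard : T.card = p := by
      have h1 : T.image Fin.val = Finset.Ico (k - p) k := by
        ext m
        simp only [Finset.mem_image, hT, Finset.mem_filter, Finset.mem_univ, true_and,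
          Finset.mem_Ico]
        constructor
        · rintro ⟨i, hi, rfl⟩; exact ⟨hi, i.isLt⟩
        · rintro ⟨h1, h2⟩; exact ⟨⟨m, h2⟩, h1, rfl⟩
      have h2 : (T.image Fin.val).card = T.card :=
        Finset.card_image_of_injective T Fin.val_injective
      rw [h1, Nat.card_Ico] at h2
      omega
    have hXcard : X.card = p := by
      rw [hX, Finset.card_image_of_injective _ huinj, hTcard]
    refine le_trans (Nat.sInf_le ⟨X, hXcard, rfl⟩) ?_
    set N := extNbhd G (↑X : Set V) with hN
    set R : V → V → Prop := fun a b => ∃ i : Fin k, v i = a ∧ u i = b with hR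
    have hvinj : Function.Injective v := by
      intro i j hij
      by_contra hne
      rcases lt_trichotomy i j with h | h | h
      · have h2 := (hcond i).2.2 (u j) (by rw [hij]; exact (hcond j).2.1) (hu_not_Z j)
          (fun l hl hlj => by
            have := huinj hlj; subst this
            exact absurd (hl.trans h) (lt_irrefl _))
        exact hne (huinj h2.symm)
      · exact hne h
      · have h2 := (hcond j).2.2 (u i) (by rw [← hij]; exact (hcond i).2.1) (hu_not_Z i)
          (fun l hl hli => by
            have := huinj hli; subst this
            exact absurd (hl.trans h) (lt_irrefl _))
        exact hne (huinj h2)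
    have hRU : Relator.RightUnique R := by
      rintro a b c ⟨i, hi1, hi2⟩ ⟨j, hj1, hj2⟩
      have := hvinj (hi1.trans hj1.symm)
      subst this
      rw [← hi2, ← hj2]
    have lemE : ∀ (i : Fin k) (w), Relation.ReflTransGen R (u i) w →
        ∃ i' : Fin k, (i : ℕ) ≤ (i' : ℕ) ∧ u i' = w := by
      intro i w h
      induction h with
      | refl => exact ⟨i, le_rfl, rfl⟩
      | tail h1 h2 ih =>
        obtain ⟨i'', hle, rfl⟩ := ih
        obtain ⟨m, hm1, hm2⟩ := h2
        have hlt : (i'' : ℕ) < (m : ℕ) := by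
          rcases (hcond m).1 with h | ⟨j, hj, hju⟩
          · rw [hm1] at h; exact absurd h (hu_not_Z i'')
          · have := huinj (hju.trans hm1)
            subst this
            exact hj
        exact ⟨m, by omega, hm2⟩
    have lemA0 : ∀ n : ℕ, ∀ i : Fin k, (i : ℕ) = n →
        ∃ b, b ∈ Z ∧ Relation.ReflTransGen R b (u i) := by
      intro n
      induction n using Nat.strong_induction_on with
      | _ n ih =>
        intro i hi
        rcases (hcond i).1 with h | ⟨j, hj, hju⟩
        · exact ⟨v i, h, Relation.ReflTransGen.single ⟨i, rfl, rfl⟩⟩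
        · have hjlt : (j : ℕ) < n := by rw [← hi]; exact hj
          obtain ⟨b, hb, hr⟩ := ih j hjlt j rfl
          exact ⟨b, hb, hr.tail ⟨i, hju ▸ rfl, rfl⟩⟩
    have lemA : ∀ y : V, ∃ b, b ∈ Z ∧ Relation.ReflTransGen R b y := by
      intro y
      by_cases hy : y ∈ Z
      · exact ⟨y, hy, Relation.ReflTransGen.refl⟩
      · obtain ⟨i, rfl⟩ := (hcompl y).1 hy
        exact lemA0 i i rfl
    have claimC : ∀ y ∈ N, ∀ i : Fin k, v i = y → k - p ≤ (i : ℕ) := by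
      intro y hy i hvi
      by_contra hcon
      push_neg at hcon
      obtain ⟨x, hxX, hadj⟩ := hy.2
      obtain ⟨m, hm, rfl⟩ := (hmemX x).1 hxX
      have := (hcond i).2.2 (u m) (hvi ▸ hadj) (hu_not_Z m)
        (fun j hjlt hjm => by
          have hjm' := huinj hjm
          rw [hjm'] at hjlt
          have h3 : (m : ℕ) < (i : ℕ) := hjlt
          omega)
      have := huinj this.symm
      subst this
      omega
    have keyLemma : ∀ y ∈ N, ∀ y' ∈ N, Relation.ReflTransGen R y y' → y = y' := by
      intro y hy y' hy' h
      rcases Relation.ReflTransGen.cases_head h with rfl | ⟨z, hz1, hz2⟩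
      · rfl
      obtain ⟨i, hvi, hui⟩ := hz1
      have hip : k - p ≤ (i : ℕ) := claimC y hy i hvi
      subst hui
      obtain ⟨i', hle, rfl⟩ := lemE i y' hz2
      exact absurd ((hmemX _).2 ⟨i', by omega, rfl⟩) hy'.1
    set f : V → V := fun y => Classical.choose (lemA y) with hf
    have hfspec : ∀ y, f y ∈ Z ∧ Relation.ReflTransGen R (f y) y :=
      fun y => Classical.choose_spec (lemA y)
    have hinj : Set.InjOn f N := by
      intro y hy y' hy' hff
      obtain ⟨hb, hby⟩ := hfspec y
      obtain ⟨hb', hby'⟩ := hfspec y'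
      rw [hff] at hby
      rcases Relation.ReflTransGen.total_of_right_unique hRU hby hby' with h | h
      · exact keyLemma y hy y' hy' h
      · exact (keyLemma y' hy' y hy h).symm
    have hmaps : f '' N ⊆ ↑Z := by
      rintro b ⟨y, _, rfl⟩
      exact (hfspec y).1
    calc N.ncard = (f '' N).ncard := (Set.ncard_image_of_injOn hinj).symm
      _ ≤ (↑Z : Set V).ncard := Set.ncard_le_ncard hmaps (Z.finite_toSet)
      _ = Z.card := Set.ncard_coe_finset Z
  · -- Case 2 : take all forced vertices plus `p - k` vertices of `Z`
    push_neg at hpk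
    obtain ⟨S, hS, hScard⟩ := Finset.exists_subset_card_eq
      (show p - k ≤ Z.card by omega)
    set X : Finset V := Finset.univ.image u ∪ S with hX
    have hdisj : Disjoint (Finset.univ.image u) S := by
      rw [Finset.disjoint_left]
      rintro a ha haS
      simp only [Finset.mem_image, Finset.mem_univ, true_and] at ha
      obtain ⟨i, rfl⟩ := ha
      exact hu_not_Z i (hS haS)
    have hXcard : X.card = p := by
      rw [hX, Finset.card_union_of_disjoint hdisj,
        Finset.card_image_of_injective _ huinj, Finset.card_univ, Fintype.card_fin, hScard]
      omega
    refine le_trans (Nat.sInf_le ⟨X, hXcard, rfl⟩) ?_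
    have hsub : extNbhd G (↑X : Set V) ⊆ ↑(Z \ S) := by
      rintro y ⟨hyX, -⟩
      have hyX' : y ∉ X := by simpa using hyX
      rw [hX] at hyX'
      simp only [Finset.mem_union, Finset.mem_image, Finset.mem_univ, true_and,
        not_or, not_exists] at hyX'
      have hyZ : y ∈ Z := by
        by_contra h
        obtain ⟨i, rfl⟩ := (hcompl y).1 h
        exact hyX'.1 i rfl
      simp only [Finset.coe_sdiff, Set.mem_diff, Finset.mem_coe]
      exact ⟨hyZ, hyX'.2⟩
    calc (extNbhd G (↑X : Set V)).ncard ≤ (↑(Z \ S) : Set V).ncard :=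
          Set.ncard_le_ncard hsub (Finset.finite_toSet _)
      _ = (Z \ S).card := Set.ncard_coe_finset _
      _ ≤ Z.card := Finset.card_le_card Finset.sdiff_subset

/-- If `G` is a graph of order `n`, then `Z(G) ≥ δ_p(G)` for every `p ∈ [n]`. -/
theorem stmt_2 [Fintype V] (G : SimpleGraph V) (p : ℕ)
    (hp1 : 1 ≤ p) (hpn : p ≤ Fintype.card V) :
    deltaP G p ≤ zeroForcingNumber G := by
  have huniv : IsZeroForcingSet G (Finset.univ : Finset V) := by
    refine ⟨0, Fin.elim0, Fin.elim0, fun i => i.elim0, ?_, fun i => i.elim0⟩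
    intro w
    constructor
    · intro h; exact absurd (Finset.mem_univ w) h
    · rintro ⟨i, -⟩; exact i.elim0
  have hne : Set.Nonempty {n | ∃ Z : Finset V, IsZeroForcingSet G Z ∧ Z.card = n} :=
    ⟨Finset.univ.card, Finset.univ, huniv, rfl⟩
  obtain ⟨Z, hZ, hZc⟩ := Nat.sInf_mem hne
  calc deltaP G p ≤ Z.card := zfs_bound G Z p hZ hpn
    _ = zeroForcingNumber G := hZc
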